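/- Let N ≥ 2 and let φ be an A_N-positive automorphism of the free group F_N. Then for every v ∈ F_N, the number of illegal pairs of the reduced word of φ(v) is at most the number of illegal pairs of the reduced word of v. (Claim used in the proof of the paper's Proposition on attracting points outside the half lamination: "illegal pairs can only appear in the images of illegal pairs", so applying φ does not increase their number.) -/

import Mathlib

/-- A word of the free group is pure positive if its reduced word is nonempty
and all its letters are positive. -/
def PurePos {N : ℕ} (v : FreeGroup (Fin N)) : Prop :=
  v.toWord ≠ [] ∧ ∀ l ∈ v.toWord, l.2 = true

/-- An automorphism of the free group is `A_N`-positive if the image of each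
generator is pure positive. -/
def IsPositive {N : ℕ} (φ : MulAut (FreeGroup (Fin N))) : Prop :=
  ∀ a : Fin N, PurePos (φ (FreeGroup.of a))

/-- The pair of letters `x y` is illegal for `φ` if applying some power of `φ` to
the two-letter word `x·y` yields a cancellation. -/
def IllegalPair {N : ℕ} (φ : MulAut (FreeGroup (Fin N))) (x y : Fin N × Bool) : Prop :=
  ∃ m : ℕ, ((φ ^ m) (FreeGroup.mk [x] * FreeGroup.mk [y])).toWord.length <
    ((φ ^ m) (FreeGroup.mk [x])).toWord.length +
      ((φ ^ m) (FreeGroup.mk [y])).toWord.length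

open Classical in
/-- The number of illegal pairs of a word: the number of indices `i` such that the
pair formed by the `i`-th and `(i+1)`-th letters is illegal. -/
noncomputable def illegalCount {N : ℕ} (φ : MulAut (FreeGroup (Fin N)))
    (l : List (Fin N × Bool)) : ℕ :=
  (l.zip l.tail).countP (fun p => decide (IllegalPair φ p.1 p.2))

namespace IllegalAux
open Classical



variable {N : ℕ}

/-- A word is reduced: no adjacent cancelling pair. -/
def IsRed (l : List (Fin N × Bool)) : Prop :=
  l.IsChain fun p q => ¬(p.1 = q.1 ∧ p.2 = !q.2)

theorem isRed_reduce (l : List (Fin N × Bool)) : IsRed (FreeGroup.reduce l) := by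
  induction l with
  | nil => simp [IsRed, FreeGroup.reduce]
  | cons x t ih =>
    rw [FreeGroup.reduce.cons]
    rcases h : FreeGroup.reduce t with _ | ⟨hd, tl⟩
    · simp [IsRed]
    · rw [h] at ih
      dsimp only
      split_ifs with hc
      · exact ih.tail
      · exact List.IsChain.cons_cons hc ih

theorem isRed_toWord (v : FreeGroup (Fin N)) : IsRed v.toWord := by
  have := isRed_reduce (N := N) v.toWord
  rwa [FreeGroup.reduce_toWord] at this

theorem reduce_eq_self {l : List (Fin N × Bool)} (h : IsRed l) : FreeGroup.reduce l = l := by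
  induction l with
  | nil => rfl
  | cons x t ih =>
    rw [FreeGroup.reduce.cons, ih h.tail]
    rcases t with _ | ⟨hd, tl⟩
    · rfl
    · dsimp only
      rw [if_neg (List.isChain_cons_cons.1 h).1]

theorem IsRed.append_left {l₁ l₂ : List (Fin N × Bool)} (h : IsRed (l₁ ++ l₂)) : IsRed l₁ :=
  (List.isChain_append.1 h).1

theorem IsRed.append_right {l₁ l₂ : List (Fin N × Bool)} (h : IsRed (l₁ ++ l₂)) : IsRed l₂ :=
  (List.isChain_append.1 h).2.1

theorem invRev_append (l₁ l₂ : List (Fin N × Bool)) :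
    FreeGroup.invRev (l₁ ++ l₂) = FreeGroup.invRev l₂ ++ FreeGroup.invRev l₁ := by
  simp [FreeGroup.invRev]

/-- Cancellation decomposition for the product of two reduced words. -/
theorem canc : ∀ n (W B : List (Fin N × Bool)), W.length ≤ n → IsRed W → IsRed B →
    ∃ W₁ S B₂, W = W₁ ++ S ∧ B = FreeGroup.invRev S ++ B₂ ∧
      FreeGroup.reduce (W ++ B) = W₁ ++ B₂ := by
  intro n
  induction n with
  | zero =>
    intro W B hW _ hB
    have hW0 : W = [] := List.eq_nil_of_length_eq_zero (Nat.le_zero.1 hW)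
    subst hW0
    exact ⟨[], [], B, rfl, by simp [FreeGroup.invRev], by simpa using reduce_eq_self hB⟩
  | succ n ih =>
    intro W B hlen hW hB
    rcases List.eq_nil_or_concat W with rfl | ⟨W', w, rfl⟩
    · exact ⟨[], [], B, rfl, by simp [FreeGroup.invRev], by simpa using reduce_eq_self hB⟩
    simp only [List.concat_eq_append] at hlen hW ⊢
    rcases B with _ | ⟨b, B'⟩
    · exact ⟨W' ++ [w], [], [], by simp, by simp [FreeGroup.invRev],
        by simpa using reduce_eq_self hW⟩
    by_cases hc : b = (w.1, !w.2)
    · have hstep : FreeGroup.Red.Step ((W' ++ [w]) ++ b :: B') (W' ++ B') := by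
        have : (W' ++ [w]) ++ b :: B' = W' ++ (w.1, w.2) :: (w.1, !w.2) :: B' := by
          simp [hc]
        rw [this]
        exact FreeGroup.Red.Step.not
      have hred : FreeGroup.reduce ((W' ++ [w]) ++ b :: B') = FreeGroup.reduce (W' ++ B') :=
        FreeGroup.reduce.Step.eq hstep
      have hW' : IsRed W' := by
        have := hW.append_left; exact this
      have hB' : IsRed B' := hB.tail
      have hlen' : W'.length ≤ n := by
        have := hlen; simp at this; omega
      obtain ⟨W₁, S, B₂, h1, h2, h3⟩ := ih W' B' hlen' hW' hB'
      refine ⟨W₁, S ++ [w], B₂, by rw [h1, List.append_assoc], ?_, by rw [hred, h3]⟩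
      rw [invRev_append, List.append_assoc, ← h2]
      simp [FreeGroup.invRev, hc]
    · refine ⟨W' ++ [w], [], b :: B', by simp, by simp [FreeGroup.invRev], ?_⟩
      have : IsRed ((W' ++ [w]) ++ b :: B') := by
        rw [IsRed, List.isChain_append]
        refine ⟨hW, hB, ?_⟩
        intro x hx y hy
        simp at hx hy
        subst hx; subst hy
        rintro ⟨h1, h2⟩
        exact hc (by cases b; cases w; simp_all)
      simpa using reduce_eq_self this





def PosW (l : List (Fin N × Bool)) : Prop := ∀ p ∈ l, p.2 = true


theorem posW_isRed {l : List (Fin N × Bool)} (h : PosW l) : IsRed l := by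
  refine List.Pairwise.isChain (List.pairwise_of_forall_mem_list ?_)
  intro p hp q hq
  rw [h p hp, h q hq]
  simp

theorem toWord_mul (u w : FreeGroup (Fin N)) :
    (u * w).toWord = FreeGroup.reduce (u.toWord ++ w.toWord) := by
  conv_lhs => rw [← FreeGroup.mk_toWord (x := u), ← FreeGroup.mk_toWord (x := w)]
  rw [FreeGroup.mul_mk, FreeGroup.toWord_mk]

theorem toWord_mul_pos {u w : FreeGroup (Fin N)} (hu : PosW u.toWord) (hw : PosW w.toWord) :
    (u * w).toWord = u.toWord ++ w.toWord := by
  rw [toWord_mul]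
  exact reduce_eq_self (posW_isRed (fun p hp => by
    rcases List.mem_append.1 hp with h | h
    · exact hu p h
    · exact hw p h))

theorem posW_append {l₁ l₂ : List (Fin N × Bool)} (h₁ : PosW l₁) (h₂ : PosW l₂) :
    PosW (l₁ ++ l₂) := fun p hp => by
  rcases List.mem_append.1 hp with h | h
  · exact h₁ p h
  · exact h₂ p h

theorem mk_single_pos (a : Fin N) : FreeGroup.mk [(a, true)] = FreeGroup.of a := rfl

theorem mk_single_neg (a : Fin N) : FreeGroup.mk [(a, false)] = (FreeGroup.of a)⁻¹ := by
  rw [FreeGroup.of, FreeGroup.inv_mk]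
  rfl

theorem toWord_single (y : Fin N × Bool) : (FreeGroup.mk [y]).toWord = [y] := by
  rw [FreeGroup.toWord_mk, FreeGroup.reduce_singleton]

variable {φ : MulAut (FreeGroup (Fin N))}

theorem posW_phi (hpos : IsPositive φ) {u : FreeGroup (Fin N)} (hu : PosW u.toWord) :
    PosW (φ u).toWord := by
  have key : ∀ l : List (Fin N × Bool), PosW l → PosW (φ (FreeGroup.mk l)).toWord := by
    intro l
    induction l with
    | nil =>
      intro _
      have : FreeGroup.mk ([] : List (Fin N × Bool)) = 1 := rfl
      rw [this, map_one, FreeGroup.toWord_one]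
      exact fun p hp => absurd hp (List.not_mem_nil)
    | cons p t ih =>
      intro hl
      have hp2 : p.2 = true := hl p (List.mem_cons_self)
      have hsplit : FreeGroup.mk (p :: t) = FreeGroup.of p.1 * FreeGroup.mk t := by
        have : p :: t = [(p.1, true)] ++ t := by
          rw [← hp2]
          rfl
        rw [this, ← FreeGroup.mul_mk, mk_single_pos]
      have ht : PosW t := fun q hq => hl q (List.mem_cons_of_mem p hq)
      rw [hsplit, map_mul]
      have h1 : PosW (φ (FreeGroup.of p.1)).toWord := (hpos p.1).2
      have h2 : PosW (φ (FreeGroup.mk t)).toWord := ih ht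
      rw [toWord_mul_pos h1 h2]
      exact posW_append h1 h2
  have := key u.toWord hu
  rwa [FreeGroup.mk_toWord] at this

theorem pow_apply_succ (m : ℕ) (u : FreeGroup (Fin N)) :
    (φ ^ (m + 1)) u = (φ ^ m) (φ u) := by
  rw [pow_succ, MulAut.mul_apply]

theorem posW_pow (hpos : IsPositive φ) (m : ℕ) {u : FreeGroup (Fin N)} (hu : PosW u.toWord) :
    PosW ((φ ^ m) u).toWord := by
  induction m generalizing u with
  | zero => simpa using hu
  | succ m ih =>
    rw [pow_apply_succ]
    exact ih (posW_phi hpos hu)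

/-- Length of the reduced word. -/
def nlen (z : FreeGroup (Fin N)) : ℕ := z.toWord.length

theorem nlen_inv (z : FreeGroup (Fin N)) : nlen z⁻¹ = nlen z := by
  rw [nlen, nlen, FreeGroup.toWord_inv, FreeGroup.invRev_length]

theorem nlen_mul_le (u w : FreeGroup (Fin N)) : nlen (u * w) ≤ nlen u + nlen w := by
  rw [nlen, toWord_mul]
  calc (FreeGroup.reduce (u.toWord ++ w.toWord)).length
      ≤ (u.toWord ++ w.toWord).length := FreeGroup.Red.length_le FreeGroup.reduce.red
    _ = nlen u + nlen w := List.length_append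

theorem len_add_pos (hpos : IsPositive φ) {u w : FreeGroup (Fin N)}
    (hu : PosW u.toWord) (hw : PosW w.toWord) (m : ℕ) :
    nlen ((φ ^ m) (u * w)) = nlen ((φ ^ m) u) + nlen ((φ ^ m) w) := by
  rw [map_mul, nlen, toWord_mul_pos (posW_pow hpos m hu) (posW_pow hpos m hw),
    List.length_append]
  rfl

theorem len_add_neg (hpos : IsPositive φ) {u w : FreeGroup (Fin N)}
    (hu : PosW (u⁻¹).toWord) (hw : PosW (w⁻¹).toWord) (m : ℕ) :
    nlen ((φ ^ m) (u * w)) = nlen ((φ ^ m) u) + nlen ((φ ^ m) w) := by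
  have h1 : nlen ((φ ^ m) (u * w)) = nlen ((φ ^ m) (w⁻¹ * u⁻¹)) := by
    rw [← nlen_inv, ← map_inv, mul_inv_rev]
  rw [h1, len_add_pos hpos hw hu]
  have h2 : (φ ^ m) w⁻¹ = ((φ ^ m) w)⁻¹ := map_inv _ _
  have h3 : (φ ^ m) u⁻¹ = ((φ ^ m) u)⁻¹ := map_inv _ _
  rw [h2, h3, nlen_inv, nlen_inv, add_comm]

theorem not_illegal_same_sign (hpos : IsPositive φ) (p q : Fin N) (b : Bool) :
    ¬ IllegalPair φ (p, b) (q, b) := by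
  rintro ⟨m, hm⟩
  cases b
  · rw [mk_single_neg, mk_single_neg] at hm
    have := len_add_neg hpos (u := (FreeGroup.of p)⁻¹) (w := (FreeGroup.of q)⁻¹)
      (by rw [inv_inv, FreeGroup.toWord_of]; rintro x hx; simp at hx; rw [hx])
      (by rw [inv_inv, FreeGroup.toWord_of]; rintro x hx; simp at hx; rw [hx]) m
    rw [nlen, nlen, nlen] at this
    omega
  · rw [mk_single_pos, mk_single_pos] at hm
    have := len_add_pos hpos (u := FreeGroup.of p) (w := FreeGroup.of q)
      (by rw [FreeGroup.toWord_of]; rintro x hx; simp at hx; rw [hx])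
      (by rw [FreeGroup.toWord_of]; rintro x hx; simp at hx; rw [hx]) m
    rw [nlen, nlen, nlen] at this
    omega



def Blk (φ : MulAut (FreeGroup (Fin N))) (y : Fin N × Bool) : List (Fin N × Bool) :=
  (φ (FreeGroup.mk [y])).toWord

theorem Blk_ne_nil (y : Fin N × Bool) : Blk φ y ≠ [] := by
  rw [Blk, Ne, FreeGroup.toWord_eq_nil_iff, EmbeddingLike.map_eq_one_iff,
    ← FreeGroup.toWord_eq_nil_iff, toWord_single]
  simp

theorem phi_of_head (hpos : IsPositive φ) (c : Fin N) :
    ∃ c₀ t, (φ (FreeGroup.of c)).toWord = (c₀, true) :: t ∧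
      φ (FreeGroup.of c) = FreeGroup.of c₀ * FreeGroup.mk t ∧ PosW t := by
  obtain ⟨hne, hall⟩ := hpos c
  obtain ⟨hd, t, h⟩ := List.exists_cons_of_ne_nil hne
  have hd2 : hd.2 = true := hall hd (by rw [h]; exact List.mem_cons_self)
  have hhd : hd = (hd.1, true) := by rw [← hd2]
  refine ⟨hd.1, t, by rw [h, hhd], ?_, ?_⟩
  · conv_lhs => rw [← FreeGroup.mk_toWord (x := φ (FreeGroup.of c)), h, hhd]
    rw [show ((hd.1, true) :: t) = [(hd.1, true)] ++ t from rfl, ← FreeGroup.mul_mk,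
      mk_single_pos]
  · intro q hq
    exact hall q (by rw [h]; exact List.mem_cons_of_mem hd hq)

theorem phi_of_last (hpos : IsPositive φ) (c : Fin N) :
    ∃ c₁ t, (φ (FreeGroup.of c)).toWord = t ++ [(c₁, true)] ∧
      φ (FreeGroup.of c) = FreeGroup.mk t * FreeGroup.of c₁ ∧ PosW t := by
  obtain ⟨hne, hall⟩ := hpos c
  rcases List.eq_nil_or_concat ((φ (FreeGroup.of c)).toWord) with h | ⟨t, lst, h⟩
  · exact absurd h hne
  rw [List.concat_eq_append] at h
  have hl2 : lst.2 = true := hall lst (by rw [h]; simp)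
  have hlst : lst = (lst.1, true) := by rw [← hl2]
  refine ⟨lst.1, t, by rw [h, hlst], ?_, ?_⟩
  · conv_lhs => rw [← FreeGroup.mk_toWord (x := φ (FreeGroup.of c)), h, hlst]
    rw [← FreeGroup.mul_mk, mk_single_pos]
  · intro q hq
    exact hall q (by rw [h]; exact List.mem_append_left _ hq)

theorem toWord_mk_posW {t : List (Fin N × Bool)} (ht : PosW t) :
    (FreeGroup.mk t).toWord = t := by
  rw [FreeGroup.toWord_mk, reduce_eq_self (posW_isRed ht)]

theorem posW_of (a : Fin N) : PosW (FreeGroup.of a).toWord := by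
  rw [FreeGroup.toWord_of]; rintro x hx; simp at hx; rw [hx]

theorem nlen_mul3_le (u w z : FreeGroup (Fin N)) :
    nlen (u * w * z) ≤ nlen u + nlen w + nlen z :=
  le_trans (nlen_mul_le _ _) (add_le_add_left (nlen_mul_le _ _) _)

/-- Key transfer lemma: if the junction pair formed by the last letter of the block of `y`
and the first letter of the block of `x` is illegal, then the pair `(y, x)` is illegal. -/
theorem illegal_transfer (hpos : IsPositive φ) (y x : Fin N × Bool) (hsign : y.2 ≠ x.2)
    (p q : Fin N × Bool) (hp : (Blk φ y).getLast? = some p) (hq : (Blk φ x).head? = some q)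
    (h : IllegalPair φ p q) : IllegalPair φ y x := by
  obtain ⟨m, hm⟩ := h
  rcases hy2 : y.2 with _ | _
  · -- y negative, x positive
    have hx2 : x.2 = true := by cases hx2 : x.2 <;> simp_all
    have hyy : FreeGroup.mk [y] = (FreeGroup.of y.1)⁻¹ := by
      rw [show y = (y.1, false) from by rw [← hy2], mk_single_neg]
    have hxx : FreeGroup.mk [x] = FreeGroup.of x.1 := by
      rw [show x = (x.1, true) from by rw [← hx2], mk_single_pos]
    obtain ⟨c₀, t, hu, hsp, hpt⟩ := phi_of_head hpos y.1
    obtain ⟨a₀, s, hv, hsp', hps⟩ := phi_of_head hpos x.1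
    -- identify p and q
    have hblky : Blk φ y = (List.map (fun g => (g.1, !g.2)) t).reverse ++ [(c₀, false)] := by
      rw [Blk, hyy, map_inv, FreeGroup.toWord_inv, hu, FreeGroup.invRev]
      simp
    have hpval : p = (c₀, false) := by
      rw [hblky, List.getLast?_concat] at hp
      exact (Option.some_injective _ hp).symm
    have hqval : q = (a₀, true) := by
      rw [Blk, hxx, hv] at hq
      simp at hq
      exact hq.symm
    rw [hpval, hqval, mk_single_neg, mk_single_pos] at hm
    refine ⟨m + 1, ?_⟩
    rw [hyy, hxx]
    show nlen ((φ ^ (m+1)) ((FreeGroup.of y.1)⁻¹ * FreeGroup.of x.1)) <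
      nlen ((φ ^ (m+1)) (FreeGroup.of y.1)⁻¹) + nlen ((φ ^ (m+1)) (FreeGroup.of x.1))
    have hm' : nlen ((φ ^ m) ((FreeGroup.of c₀)⁻¹ * FreeGroup.of a₀)) <
        nlen ((φ ^ m) (FreeGroup.of c₀)) + nlen ((φ ^ m) (FreeGroup.of a₀)) := by
      have h1 : (φ ^ m) (FreeGroup.of c₀)⁻¹ = ((φ ^ m) (FreeGroup.of c₀))⁻¹ := map_inv _ _
      have h2 := hm
      rw [h1] at h2
      have h3 : (((φ ^ m) (FreeGroup.of c₀))⁻¹).toWord.length =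
          ((φ ^ m) (FreeGroup.of c₀)).toWord.length := nlen_inv _
      rw [h3] at h2
      exact h2
    have hpt' : PosW (FreeGroup.mk t).toWord := by rw [toWord_mk_posW hpt]; exact hpt
    have hps' : PosW (FreeGroup.mk s).toWord := by rw [toWord_mk_posW hps]; exact hps
    have e1 : nlen ((φ ^ (m+1)) (FreeGroup.of y.1)⁻¹) =
        nlen ((φ ^ m) (FreeGroup.of c₀)) + nlen ((φ ^ m) (FreeGroup.mk t)) := by
      rw [map_inv, nlen_inv, pow_apply_succ, hsp, len_add_pos hpos (posW_of c₀) hpt']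
    have e2 : nlen ((φ ^ (m+1)) (FreeGroup.of x.1)) =
        nlen ((φ ^ m) (FreeGroup.of a₀)) + nlen ((φ ^ m) (FreeGroup.mk s)) := by
      rw [pow_apply_succ, hsp', len_add_pos hpos (posW_of a₀) hps']
    have e3 : (φ ^ (m+1)) ((FreeGroup.of y.1)⁻¹ * FreeGroup.of x.1) =
        (φ ^ m) ((FreeGroup.mk t)⁻¹ * ((FreeGroup.of c₀)⁻¹ * FreeGroup.of a₀) *
          FreeGroup.mk s) := by
      rw [pow_apply_succ, map_mul, map_inv, hsp, hsp']
      congr 1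
      group
    have e4 : nlen ((φ ^ m) ((FreeGroup.mk t)⁻¹ * ((FreeGroup.of c₀)⁻¹ * FreeGroup.of a₀) *
          FreeGroup.mk s)) ≤ nlen ((φ ^ m) (FreeGroup.mk t)) +
          nlen ((φ ^ m) ((FreeGroup.of c₀)⁻¹ * FreeGroup.of a₀)) +
          nlen ((φ ^ m) (FreeGroup.mk s)) := by
      rw [map_mul, map_mul, map_inv]
      have := nlen_mul3_le (((φ ^ m) (FreeGroup.mk t))⁻¹)
        ((φ ^ m) ((FreeGroup.of c₀)⁻¹ * FreeGroup.of a₀)) ((φ ^ m) (FreeGroup.mk s))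
      rwa [nlen_inv] at this
    rw [e3, e1, e2]
    omega
  · -- y positive, x negative
    have hx2 : x.2 = false := by cases hx2 : x.2 <;> simp_all
    have hyy : FreeGroup.mk [y] = FreeGroup.of y.1 := by
      rw [show y = (y.1, true) from by rw [← hy2], mk_single_pos]
    have hxx : FreeGroup.mk [x] = (FreeGroup.of x.1)⁻¹ := by
      rw [show x = (x.1, false) from by rw [← hx2], mk_single_neg]
    obtain ⟨b₁, t, hu, hsp, hpt⟩ := phi_of_last hpos y.1
    obtain ⟨c₁, s, hv, hsp', hps⟩ := phi_of_last hpos x.1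
    have hpval : p = (b₁, true) := by
      rw [Blk, hyy, hu, List.getLast?_concat] at hp
      exact (Option.some_injective _ hp).symm
    have hblkx : Blk φ x = (c₁, false) :: (List.map (fun g => (g.1, !g.2)) s).reverse := by
      rw [Blk, hxx, map_inv, FreeGroup.toWord_inv, hv, FreeGroup.invRev]
      simp
    have hqval : q = (c₁, false) := by
      rw [hblkx] at hq
      simp at hq
      exact hq.symm
    rw [hpval, hqval, mk_single_pos, mk_single_neg] at hm
    refine ⟨m + 1, ?_⟩
    rw [hyy, hxx]
    show nlen ((φ ^ (m+1)) (FreeGroup.of y.1 * (FreeGroup.of x.1)⁻¹)) <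
      nlen ((φ ^ (m+1)) (FreeGroup.of y.1)) + nlen ((φ ^ (m+1)) (FreeGroup.of x.1)⁻¹)
    have hm' : nlen ((φ ^ m) (FreeGroup.of b₁ * (FreeGroup.of c₁)⁻¹)) <
        nlen ((φ ^ m) (FreeGroup.of b₁)) + nlen ((φ ^ m) (FreeGroup.of c₁)) := by
      have h1 : (φ ^ m) (FreeGroup.of c₁)⁻¹ = ((φ ^ m) (FreeGroup.of c₁))⁻¹ := map_inv _ _
      have h2 := hm
      rw [h1] at h2
      have h3 : (((φ ^ m) (FreeGroup.of c₁))⁻¹).toWord.length =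
          ((φ ^ m) (FreeGroup.of c₁)).toWord.length := nlen_inv _
      rw [h3] at h2
      exact h2
    have hpt' : PosW (FreeGroup.mk t).toWord := by rw [toWord_mk_posW hpt]; exact hpt
    have hps' : PosW (FreeGroup.mk s).toWord := by rw [toWord_mk_posW hps]; exact hps
    have e1 : nlen ((φ ^ (m+1)) (FreeGroup.of y.1)) =
        nlen ((φ ^ m) (FreeGroup.mk t)) + nlen ((φ ^ m) (FreeGroup.of b₁)) := by
      rw [pow_apply_succ, hsp, len_add_pos hpos hpt' (posW_of b₁)]
    have e2 : nlen ((φ ^ (m+1)) (FreeGroup.of x.1)⁻¹) =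
        nlen ((φ ^ m) (FreeGroup.mk s)) + nlen ((φ ^ m) (FreeGroup.of c₁)) := by
      rw [map_inv, nlen_inv, pow_apply_succ, hsp', len_add_pos hpos hps' (posW_of c₁)]
    have e3 : (φ ^ (m+1)) (FreeGroup.of y.1 * (FreeGroup.of x.1)⁻¹) =
        (φ ^ m) (FreeGroup.mk t * (FreeGroup.of b₁ * (FreeGroup.of c₁)⁻¹) *
          (FreeGroup.mk s)⁻¹) := by
      rw [pow_apply_succ, map_mul, map_inv, hsp, hsp']
      congr 1
      group
    have e4 : nlen ((φ ^ m) (FreeGroup.mk t * (FreeGroup.of b₁ * (FreeGroup.of c₁)⁻¹) *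
          (FreeGroup.mk s)⁻¹)) ≤ nlen ((φ ^ m) (FreeGroup.mk t)) +
          nlen ((φ ^ m) (FreeGroup.of b₁ * (FreeGroup.of c₁)⁻¹)) +
          nlen ((φ ^ m) (FreeGroup.mk s)) := by
      rw [map_mul, map_mul, map_inv]
      have := nlen_mul3_le ((φ ^ m) (FreeGroup.mk t))
        ((φ ^ m) (FreeGroup.of b₁ * (FreeGroup.of c₁)⁻¹)) (((φ ^ m) (FreeGroup.mk s))⁻¹)
      rwa [nlen_inv] at this
    rw [e3, e1, e2]
    omega

/-- If the blocks of `y` and `x` cancel, the pair `(y, x)` is illegal (witness `m = 1`). -/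
theorem illegal_of_cancel (y x : Fin N × Bool) (T R : List (Fin N × Bool)) (p : Fin N × Bool)
    (hy : Blk φ y = T ++ [p]) (hx : Blk φ x = (p.1, !p.2) :: R) : IllegalPair φ y x := by
  refine ⟨1, ?_⟩
  have hred : (φ (FreeGroup.mk [y] * FreeGroup.mk [x])).toWord =
      FreeGroup.reduce (Blk φ y ++ Blk φ x) := by
    rw [map_mul, toWord_mul]; rfl
  have hstep : FreeGroup.Red.Step (Blk φ y ++ Blk φ x) (T ++ R) := by
    rw [hy, hx]
    have : (T ++ [p]) ++ (p.1, !p.2) :: R = T ++ (p.1, p.2) :: (p.1, !p.2) :: R := by simp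
    rw [this]
    exact FreeGroup.Red.Step.not
  have hlen : (φ (FreeGroup.mk [y] * FreeGroup.mk [x])).toWord.length ≤ T.length + R.length := by
    rw [hred, FreeGroup.reduce.Step.eq hstep]
    have := FreeGroup.Red.length_le (FreeGroup.reduce.red (L := T ++ R))
    simpa using this
  have hly : (Blk φ y).length = T.length + 1 := by rw [hy]; simp
  have hlx : (Blk φ x).length = R.length + 1 := by rw [hx]; simp
  have hy1 : ((φ ^ 1) (FreeGroup.mk [y])).toWord.length = T.length + 1 := by
    rw [pow_one]; exact hly
  have hx1 : ((φ ^ 1) (FreeGroup.mk [x])).toWord.length = R.length + 1 := by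
    rw [pow_one]; exact hlx
  rw [hy1, hx1, pow_one]
  omega

section Counting

open Classical

/-- The predicate used in `illegalCount`, as a Bool-valued function. -/
noncomputable def F (φ : MulAut (FreeGroup (Fin N))) :
    (Fin N × Bool) × (Fin N × Bool) → Bool :=
  fun p => @decide (IllegalPair φ p.1 p.2) (Classical.propDecidable _)

def zp (l : List (Fin N × Bool)) : List ((Fin N × Bool) × (Fin N × Bool)) := l.zip l.tail

theorem illegalCount_eq (l : List (Fin N × Bool)) :
    illegalCount φ l = (zp l).countP (F φ) := rfl

theorem F_eq_true {p : (Fin N × Bool) × (Fin N × Bool)} (h : IllegalPair φ p.1 p.2) :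
    F φ p = true := by
  rw [F]
  exact decide_eq_true h

theorem F_eq_false {p : (Fin N × Bool) × (Fin N × Bool)} (h : ¬ IllegalPair φ p.1 p.2) :
    F φ p = false := by
  rw [F]
  exact decide_eq_false h

theorem zp_cons_cons (a b : Fin N × Bool) (t : List (Fin N × Bool)) :
    zp (a :: b :: t) = (a, b) :: zp (b :: t) := rfl

theorem zp_append (A B : List (Fin N × Bool)) (a b : Fin N × Bool)
    (ha : A.getLast? = some a) (hb : B.head? = some b) :
    zp (A ++ B) = zp A ++ (a, b) :: zp B := by
  induction A with
  | nil => simp at ha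
  | cons x A' ih =>
    rcases A' with _ | ⟨x', A''⟩
    · simp at ha
      subst ha
      rcases B with _ | ⟨y, B'⟩
      · simp at hb
      · simp at hb
        subst hb
        rfl
    · have hlast : (x' :: A'').getLast? = some a := by
        rw [← ha]
        exact (List.getLast?_cons_cons ..).symm ▸ rfl
      have := ih hlast
      have hcons : (x :: x' :: A'') ++ B = x :: ((x' :: A'') ++ B) := rfl
      rw [hcons, show (x' :: A'') ++ B = x' :: (A'' ++ B) from rfl, zp_cons_cons,
        show x' :: (A'' ++ B) = (x' :: A'') ++ B from rfl, this]
      rfl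

theorem cnt_append_eq (A B : List (Fin N × Bool)) (a b : Fin N × Bool)
    (ha : A.getLast? = some a) (hb : B.head? = some b) :
    illegalCount φ (A ++ B) = illegalCount φ A +
      (if IllegalPair φ a b then 1 else 0) + illegalCount φ B := by
  rw [illegalCount_eq, illegalCount_eq, illegalCount_eq, zp_append A B a b ha hb,
    List.countP_append, List.countP_cons]
  by_cases h : IllegalPair φ a b
  · rw [if_pos h, F_eq_true (p := (a, b)) h,
      show (if (true : Bool) = true then (1:ℕ) else 0) = 1 from rfl]
    omega
  · rw [if_neg h, F_eq_false (p := (a, b)) h,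
      show (if (false : Bool) = true then (1:ℕ) else 0) = 0 from rfl]
    omega

theorem cnt_append_le (A B : List (Fin N × Bool)) :
    illegalCount φ (A ++ B) ≤ illegalCount φ A + illegalCount φ B + 1 := by
  rcases A with _ | ⟨x, A'⟩
  · have h0 : illegalCount φ ([] : List (Fin N × Bool)) = 0 := by simp [illegalCount_eq, zp]
    rw [List.nil_append, h0]
    omega
  rcases B with _ | ⟨y, B'⟩
  · have h0 : illegalCount φ ([] : List (Fin N × Bool)) = 0 := by simp [illegalCount_eq, zp]
    rw [List.append_nil, h0]
    omega
  obtain ⟨T, a, hT⟩ := List.eq_nil_or_concat (x :: A') |>.resolve_left (by simp)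
  rw [List.concat_eq_append] at hT
  have ha : (x :: A').getLast? = some a := by rw [hT]; exact List.getLast?_concat
  have hb : (y :: B').head? = some y := rfl
  rw [cnt_append_eq (x :: A') (y :: B') a y ha hb]
  split_ifs <;> omega

theorem cnt_prefix_le (A S : List (Fin N × Bool)) :
    illegalCount φ A ≤ illegalCount φ (A ++ S) := by
  rcases A with _ | ⟨x, A'⟩
  · have h0 : illegalCount φ ([] : List (Fin N × Bool)) = 0 := by simp [illegalCount_eq, zp]
    rw [h0]
    exact Nat.zero_le _
  rcases S with _ | ⟨y, S'⟩
  · simp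
  obtain ⟨T, a, hT⟩ := List.eq_nil_or_concat (x :: A') |>.resolve_left (by simp)
  rw [List.concat_eq_append] at hT
  have ha : (x :: A').getLast? = some a := by rw [hT]; exact List.getLast?_concat
  rw [cnt_append_eq (x :: A') (y :: S') a y ha rfl]
  omega

theorem cnt_concat_eq (l : List (Fin N × Bool)) (x y : Fin N × Bool)
    (hy : l.getLast? = some y) :
    illegalCount φ (l ++ [x]) = illegalCount φ l + (if IllegalPair φ y x then 1 else 0) := by
  have h0 : illegalCount φ [x] = 0 := rfl
  rw [cnt_append_eq l [x] y x hy rfl, h0]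
  exact Nat.add_zero _

theorem cnt_sign_zero (hpos : IsPositive φ) (b : Bool) (l : List (Fin N × Bool))
    (h : ∀ p ∈ l, p.2 = b) : illegalCount φ l = 0 := by
  rw [illegalCount_eq, List.countP_eq_zero]
  intro q hq
  obtain ⟨h1, h2⟩ := List.of_mem_zip (show (q.1, q.2) ∈ l.zip l.tail from hq)
  have hq1 : q.1.2 = b := h q.1 h1
  have hq2 : q.2.2 = b := h q.2 (List.mem_of_mem_tail h2)
  have : ¬ IllegalPair φ q.1 q.2 := by
    rw [show q.1 = (q.1.1, b) from by rw [← hq1], show q.2 = (q.2.1, b) from by rw [← hq2]]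
    exact not_illegal_same_sign hpos _ _ b
  simp [F_eq_false this]

theorem Blk_sign (hpos : IsPositive φ) (y : Fin N × Bool) :
    ∀ p ∈ Blk φ y, p.2 = y.2 := by
  intro p hp
  rcases hy2 : y.2 with _ | _
  · have hyy : FreeGroup.mk [y] = (FreeGroup.of y.1)⁻¹ := by
      rw [show y = (y.1, false) from by rw [← hy2], mk_single_neg]
    rw [Blk, hyy, map_inv, FreeGroup.toWord_inv, FreeGroup.invRev] at hp
    simp only [List.mem_reverse, List.mem_map] at hp
    obtain ⟨q, _, hq2⟩ := hp
    rw [← hq2]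
    have := (hpos y.1).2 q (by assumption)
    simp [this]
  · have hyy : FreeGroup.mk [y] = FreeGroup.of y.1 := by
      rw [show y = (y.1, true) from by rw [← hy2], mk_single_pos]
    rw [Blk, hyy] at hp
    exact (hpos y.1).2 p hp

end Counting

theorem getLast?_concat_decomp {l : List (Fin N × Bool)} {a : Fin N × Bool}
    (h : l.getLast? = some a) : ∃ l', l = l' ++ [a] := by
  rcases List.eq_nil_or_concat l with rfl | ⟨l', b, rfl⟩
  · simp at h
  · rw [List.concat_eq_append, List.getLast?_concat] at h
    exact ⟨l', by rw [List.concat_eq_append, Option.some_injective _ h]⟩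

theorem getLast?_some_mem {l : List (Fin N × Bool)} {a : Fin N × Bool}
    (h : l.getLast? = some a) : a ∈ l := by
  obtain ⟨l', rfl⟩ := getLast?_concat_decomp h
  simp

theorem head?_some_mem {l : List (Fin N × Bool)} {a : Fin N × Bool}
    (h : l.head? = some a) : a ∈ l := by
  rcases l with _ | ⟨x, t⟩
  · simp at h
  · simp at h
    simp [h]

/-- The main induction: the invariant along appending one letter. -/
theorem main_aux (hpos : IsPositive φ) :
    ∀ l : List (Fin N × Bool), IsRed l →
      illegalCount φ ((φ (FreeGroup.mk l)).toWord) ≤ illegalCount φ l ∧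
      (l = [] ∨
        (∃ y, l.getLast? = some y ∧ (φ (FreeGroup.mk l)).toWord ≠ [] ∧
          ((φ (FreeGroup.mk l)).toWord).getLast? = (Blk φ y).getLast?) ∨
        illegalCount φ ((φ (FreeGroup.mk l)).toWord) + 1 ≤ illegalCount φ l) := by
  intro l
  induction l using List.reverseRecOn with
  | nil =>
    intro _
    constructor
    · have h1 : FreeGroup.mk ([] : List (Fin N × Bool)) = 1 := rfl
      rw [h1, map_one, FreeGroup.toWord_one]
    · left; rfl
  | append_singleton l x ih =>
    intro hred
    have hl : IsRed l := hred.append_left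
    have hBx : (φ (FreeGroup.mk [x])).toWord = Blk φ x := rfl
    have hcntBx : illegalCount φ (Blk φ x) = 0 :=
      cnt_sign_zero hpos x.2 _ (Blk_sign hpos x)
    rcases List.eq_nil_or_concat l with rfl | ⟨l₀, y, hly⟩
    · -- single letter
      refine ⟨?_, Or.inr (Or.inl ⟨x, by simp, ?_, ?_⟩)⟩
      · rw [List.nil_append, hBx, hcntBx]
        exact Nat.zero_le _
      · rw [List.nil_append, hBx]; exact Blk_ne_nil x
      · rw [List.nil_append, hBx]
    · rw [List.concat_eq_append] at hly
      have hlne : l ≠ [] := by rw [hly]; simp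
      have hylast : l.getLast? = some y := by rw [hly]; exact List.getLast?_concat
      obtain ⟨ihc, ihinv⟩ := ih hl
      set W := (φ (FreeGroup.mk l)).toWord with hWdef
      have hWeq : (φ (FreeGroup.mk (l ++ [x]))).toWord = FreeGroup.reduce (W ++ Blk φ x) := by
        rw [← FreeGroup.mul_mk, map_mul, toWord_mul, hBx]
      obtain ⟨W₁, S, B₂, hdec1, hdec2, hdec3⟩ :=
        canc W.length W (Blk φ x) le_rfl (isRed_toWord _) (isRed_toWord _)
      have hW' : (φ (FreeGroup.mk (l ++ [x]))).toWord = W₁ ++ B₂ := by rw [hWeq, hdec3]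
      have hcntconcat : illegalCount φ (l ++ [x]) =
          illegalCount φ l + (if IllegalPair φ y x then 1 else 0) :=
        cnt_concat_eq l x y hylast
      have hB₂sign : ∀ p ∈ B₂, p.2 = x.2 := by
        intro p hp
        exact Blk_sign hpos x p (by rw [hdec2]; exact List.mem_append_right _ hp)
      have hcntB₂ : illegalCount φ B₂ = 0 := cnt_sign_zero hpos x.2 _ hB₂sign
      rcases List.eq_nil_or_concat S with rfl | ⟨T, s, hS⟩
      · -- no cancellation
        rw [List.append_nil] at hdec1
        have hBB₂ : Blk φ x = B₂ := by
          rw [hdec2]; simp [FreeGroup.invRev]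
        rcases List.eq_nil_or_concat W with hWnil | ⟨W₀, w, hWw⟩
        · -- W empty
          subst hdec1
          rw [hWnil] at hW'
          rw [List.nil_append, ← hBB₂] at hW'
          refine ⟨?_, Or.inr (Or.inl ⟨x, List.getLast?_concat, ?_, ?_⟩)⟩
          · rw [hW', hcntBx]; exact Nat.zero_le _
          · rw [hW']; exact Blk_ne_nil x
          · rw [hW']
        · -- W nonempty, junction pair appears
          rw [List.concat_eq_append] at hWw
          have hWlast : W.getLast? = some w := by rw [hWw]; exact List.getLast?_concat
          obtain ⟨q, hq⟩ : ∃ q, (Blk φ x).head? = some q := by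
            rcases hBq : Blk φ x with _ | ⟨q, R⟩
            · exact absurd hBq (Blk_ne_nil x)
            · exact ⟨q, rfl⟩
          have hcntW' : illegalCount φ (W ++ Blk φ x) = illegalCount φ W +
              (if IllegalPair φ w q then 1 else 0) :=  by
            rw [cnt_append_eq W (Blk φ x) w q hWlast hq, hcntBx]
            exact Nat.add_zero _
          have hW'eq : (φ (FreeGroup.mk (l ++ [x]))).toWord = W ++ Blk φ x := by
            rw [hW', hdec1, hBB₂]
          have hinvnew : (∃ y', (l ++ [x]).getLast? = some y' ∧
              (φ (FreeGroup.mk (l ++ [x]))).toWord ≠ [] ∧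
              ((φ (FreeGroup.mk (l ++ [x]))).toWord).getLast? = (Blk φ y').getLast?) := by
            refine ⟨x, List.getLast?_concat, ?_, ?_⟩
            · rw [hW'eq]
              intro hcon
              exact Blk_ne_nil x (by rcases List.append_eq_nil_iff.1 hcon with ⟨_, h⟩; exact h)
            · rw [hW'eq, List.getLast?_append_of_ne_nil _ (Blk_ne_nil x)]
          rcases ihinv with h0 | ⟨y₀, hy₀, hWne, hlasteq⟩ | hB
          · exact absurd h0 hlne
          · have hy₀y : y₀ = y := by
              rw [hylast] at hy₀; exact (Option.some_injective _ hy₀).symm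
            subst hy₀y
            by_cases hpq : IllegalPair φ w q
            · have hsgn : y₀.2 ≠ x.2 := by
                intro hsame
                have hw2 : w.2 = y₀.2 := Blk_sign hpos y₀ w
                  (getLast?_some_mem (by rw [← hlasteq]; exact hWlast))
                have hq2 : q.2 = x.2 := Blk_sign hpos x q (head?_some_mem hq)
                have hq2' : q.2 = y₀.2 := by rw [hq2, ← hsame]
                have : ¬ IllegalPair φ w q := by
                  rw [show w = (w.1, y₀.2) from by rw [← hw2],
                    show q = (q.1, y₀.2) from by rw [← hq2']]
                  exact not_illegal_same_sign hpos _ _ _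
                exact this hpq
              have hyx : IllegalPair φ y₀ x := illegal_transfer hpos y₀ x hsgn w q
                (by rw [← hlasteq]; exact hWlast) hq hpq
              refine ⟨?_, Or.inr (Or.inl hinvnew)⟩
              rw [hW'eq, hcntW', hcntconcat, if_pos hyx, if_pos hpq]
              omega
            · refine ⟨?_, Or.inr (Or.inl hinvnew)⟩
              rw [hW'eq, hcntW', if_neg hpq, hcntconcat]
              split_ifs <;> omega
          · refine ⟨?_, Or.inr (Or.inl hinvnew)⟩
            rw [hW'eq, hcntW', hcntconcat]
            split_ifs <;> omega
      · -- cancellation: S = T ++ [s]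
        rw [List.concat_eq_append] at hS
        have hWlast : W.getLast? = some s := by
          rw [hdec1, hS, ← List.append_assoc]; exact List.getLast?_concat
        have hBxhead : Blk φ x = (s.1, !s.2) :: (FreeGroup.invRev T ++ B₂) := by
          rw [hdec2, hS, invRev_append]
          simp [FreeGroup.invRev]
        have hcntW₁ : illegalCount φ W₁ ≤ illegalCount φ W := by
          rw [hdec1]; exact cnt_prefix_le _ _
        have hcntW'le : illegalCount φ (W₁ ++ B₂) ≤ illegalCount φ W₁ + 1 := by
          have := cnt_append_le (φ := φ) W₁ B₂
          omega
        rcases ihinv with h0 | ⟨y₀, hy₀, hWne, hlasteq⟩ | hB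
        · exact absurd h0 hlne
        · -- invariant A: cancellation implies the new pair (y,x) is illegal
          have hy₀y : y₀ = y := by
            rw [hylast] at hy₀; exact (Option.some_injective _ hy₀).symm
          subst hy₀y
          have hblky : (Blk φ y₀).getLast? = some s := by rw [← hlasteq]; exact hWlast
          obtain ⟨T', hT'⟩ := getLast?_concat_decomp hblky
          have hyx : IllegalPair φ y₀ x :=
            illegal_of_cancel y₀ x T' (FreeGroup.invRev T ++ B₂) s hT' hBxhead
          have hcnt' : illegalCount φ (l ++ [x]) = illegalCount φ l + 1 := by
            rw [hcntconcat, if_pos hyx]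
          refine ⟨?_, ?_⟩
          · rw [hW', hcnt']
            omega
          · rcases List.eq_nil_or_concat B₂ with rfl | ⟨B₀, b₂, hB₂⟩
            · right; right
              rw [hW', List.append_nil, hcnt']
              omega
            rw [List.concat_eq_append] at hB₂
            · right; left
              have hB₂ne : B₂ ≠ [] := by rw [hB₂]; simp
              refine ⟨x, List.getLast?_concat, ?_, ?_⟩
              · rw [hW']
                intro hcon
                exact hB₂ne (List.append_eq_nil_iff.1 hcon).2
              · rw [hW', List.getLast?_append_of_ne_nil _ hB₂ne, hdec2,
                  List.getLast?_append_of_ne_nil _ hB₂ne]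
        · -- invariant B: we pay from the stored budget
          refine ⟨?_, ?_⟩
          · rw [hW', hcntconcat]
            split_ifs <;> omega
          · rcases List.eq_nil_or_concat B₂ with rfl | ⟨B₀, b₂, hB₂⟩
            · right; right
              rw [hW', List.append_nil, hcntconcat]
              split_ifs <;> omega
            rw [List.concat_eq_append] at hB₂
            · right; left
              have hB₂ne : B₂ ≠ [] := by rw [hB₂]; simp
              refine ⟨x, List.getLast?_concat, ?_, ?_⟩
              · rw [hW']
                intro hcon
                exact hB₂ne (List.append_eq_nil_iff.1 hcon).2
              · rw [hW', List.getLast?_append_of_ne_nil _ hB₂ne, hdec2,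
                  List.getLast?_append_of_ne_nil _ hB₂ne]

end IllegalAux

/-- Applying an `A_N`-positive automorphism cannot increase the number of illegal
pairs of a word. -/
theorem illegalCount_apply_le {N : ℕ} (hN : 2 ≤ N)
    (φ : MulAut (FreeGroup (Fin N))) (hpos : IsPositive φ)
    (v : FreeGroup (Fin N)) :
    illegalCount φ ((φ v).toWord) ≤ illegalCount φ v.toWord := by
  have h := (IllegalAux.main_aux hpos v.toWord (IllegalAux.isRed_toWord v)).1
  rwa [FreeGroup.mk_toWord] at h
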